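/- For every real R > 0, every κ > 0, every natural number n and every natural number ℓ, the integral ∫₀^R (r² − R²)^n · r^(ℓ+2) · i_ℓ(κ r) dr equals (−2)^n · n! · R^(ℓ+n+2) · i_(ℓ+n+1)(κ R) / κ^(n+1), where i_ℓ denotes the modified spherical Bessel function of the first kind. -/

import Mathlib

open scoped Nat
open Polynomial

/-- Spherical Bessel function of the first kind, via its power series. -/
noncomputable def sphJ (l : ℕ) (x : ℝ) : ℝ :=
  x ^ l / ((2 * l + 1)‼ : ℝ) *
    ∑' s : ℕ, ((-1 : ℝ) ^ s / (s.factorial * (ascPochhammer ℝ s).eval ((l : ℝ) + 3 / 2))) *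
      (x / 2) ^ (2 * s)

/-- Modified spherical Bessel function of the first kind, via its power series. -/
noncomputable def sphI (l : ℕ) (x : ℝ) : ℝ :=
  x ^ l / ((2 * l + 1)‼ : ℝ) *
    ∑' s : ℕ, (1 / (s.factorial * (ascPochhammer ℝ s).eval ((l : ℝ) + 3 / 2))) *
      (x / 2) ^ (2 * s)

/-- Modified spherical Bessel function of the second kind, via its closed form. -/
noncomputable def sphK (l : ℕ) (x : ℝ) : ℝ :=
  Real.exp (-x) / x *
    ∑ s ∈ Finset.range (l + 1),
      ((l + s).factorial : ℝ) / (s.factorial * (l - s).factorial * (2 * x) ^ s)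


noncomputable def cc (l s : ℕ) : ℝ :=
  1 / (s.factorial * (ascPochhammer ℝ s).eval ((l : ℝ) + 3 / 2))

noncomputable def dd (l s : ℕ) : ℝ :=
  (4 : ℝ)⁻¹ ^ s * cc l s / ((2 * l + 1)‼ : ℝ)

lemma asc_pos (l s : ℕ) : 0 < (ascPochhammer ℝ s).eval ((l : ℝ) + 3 / 2) :=
  ascPochhammer_pos s _ (by positivity)

lemma asc_ge_one (l s : ℕ) : 1 ≤ (ascPochhammer ℝ s).eval ((l : ℝ) + 3 / 2) := by
  induction s with
  | zero => simp [ascPochhammer_zero]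
  | succ s ih =>
    rw [ascPochhammer_succ_right]
    simp only [Polynomial.eval_mul, Polynomial.eval_add, Polynomial.eval_X,
      Polynomial.eval_natCast]
    nlinarith [asc_pos l s, (Nat.cast_nonneg l : (0:ℝ) ≤ l), (Nat.cast_nonneg s : (0:ℝ) ≤ s)]

lemma cc_pos (l s : ℕ) : 0 < cc l s := by
  have := asc_pos l s
  have : (0:ℝ) < s.factorial := by positivity
  unfold cc; positivity

lemma cc_le (l s : ℕ) : cc l s ≤ 1 / s.factorial := by
  unfold cc
  have h1 := asc_ge_one l s
  have h2 : (0:ℝ) < s.factorial := by positivity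
  rw [div_le_div_iff₀ (by positivity) h2]
  nlinarith

lemma dd_bound (l s : ℕ) : |dd l s| ≤ 1 * (4:ℝ)⁻¹ ^ s / s.factorial := by
  have h1 : 0 < cc l s := cc_pos l s
  have h2 : (1:ℝ) ≤ ((2 * l + 1)‼ : ℝ) := by
    exact_mod_cast Nat.one_le_iff_ne_zero.2 (Nat.doubleFactorial_pos _).ne'
  have h3 : 0 ≤ dd l s := by unfold dd; positivity
  rw [abs_of_nonneg h3]
  have h4 := cc_le l s
  have h5 : (0:ℝ) < s.factorial := by positivity
  have h6 : (0:ℝ) < (4:ℝ)⁻¹ ^ s := by positivity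
  unfold dd
  calc (4:ℝ)⁻¹ ^ s * cc l s / ((2 * l + 1)‼ : ℝ)
      ≤ (4:ℝ)⁻¹ ^ s * cc l s := div_le_self (by positivity) h2
    _ ≤ (4:ℝ)⁻¹ ^ s * (1 / s.factorial) := by nlinarith
    _ = 1 * (4:ℝ)⁻¹ ^ s / s.factorial := by ring

lemma sphI_eq (l : ℕ) (x : ℝ) : sphI l x = ∑' s : ℕ, dd l s * x ^ (2 * s + l) := by
  unfold sphI
  rw [← tsum_mul_left]
  refine tsum_congr fun s => ?_
  have hpow : (x / 2) ^ (2 * s) = (4:ℝ)⁻¹ ^ s * x ^ (2 * s) := by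
    rw [pow_mul, pow_mul]
    congr 1
    ring
  rw [hpow]
  unfold dd cc
  rw [pow_add]
  ring

lemma summable_aux {y : ℝ} (hy : 0 ≤ y) :
    Summable (fun s : ℕ => (s : ℝ) * y ^ s / s.factorial) := by
  rw [← summable_nat_add_iff 1]
  have h : (fun s : ℕ => ((s + 1 : ℕ) : ℝ) * y ^ (s + 1) / (s + 1).factorial)
      = fun s : ℕ => y * (y ^ s / s.factorial) := by
    funext s
    rw [Nat.factorial_succ]
    have h1 : ((s:ℝ) + 1) ≠ 0 := by positivity
    have h2 : ((s.factorial : ℝ)) ≠ 0 := by positivity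
    push_cast
    field_simp
    ring
  rw [h]
  exact (Real.summable_pow_div_factorial y).mul_left y

lemma hasDerivAt_tsum_pow (a : ℕ → ℝ) (C q : ℝ) (hq : 0 ≤ q) (m : ℕ)
    (ha : ∀ s, |a s| ≤ C * q ^ s / s.factorial) (r : ℝ) :
    HasDerivAt (fun x : ℝ => ∑' s : ℕ, a s * x ^ (2 * s + m))
      (∑' s : ℕ, a s * ((2 * s + m : ℕ) : ℝ) * r ^ (2 * s + m - 1)) r := by
  have hC : 0 ≤ C := by
    have := (abs_nonneg (a 0)).trans (ha 0)
    simpa using this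
  set X : ℝ := |r| + 1 with hXdef
  have hX1 : 1 ≤ X := by have := abs_nonneg r; simp only [hXdef]; linarith
  have hX0 : 0 < X := by linarith
  set z : ℝ := q * X ^ 2 with hzdef
  have hz : 0 ≤ z := by positivity
  set u : ℕ → ℝ := fun s => C * X ^ m * ((2 * s + m : ℕ) : ℝ) * z ^ s / s.factorial with hu
  have hsum : Summable u := by
    have h1 := (summable_aux hz).mul_left (C * X ^ m * 2)
    have h2 := (Real.summable_pow_div_factorial z).mul_left (C * X ^ m * m)
    refine (h1.add h2).congr fun s => ?_
    simp only [hu]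
    push_cast
    ring
  have hCq : Summable (fun s : ℕ => C * q ^ s / s.factorial) := by
    simpa [mul_div_assoc] using (Real.summable_pow_div_factorial q).mul_left C
  have key := hasDerivAt_tsum_of_isPreconnected (𝕜 := ℝ) (F := ℝ)
    (u := u) (g := fun s x => a s * x ^ (2 * s + m))
    (g' := fun s y => a s * ((2 * s + m : ℕ) : ℝ) * y ^ (2 * s + m - 1))
    (t := Set.Ioo (-X) X) (y₀ := 0) (y := r)
    hsum isOpen_Ioo isPreconnected_Ioo
    (fun s y _ => by
      have h := (hasDerivAt_pow (2 * s + m) y).const_mul (a s)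
      simpa [mul_assoc] using h)
    (fun s y hy => ?_) ?_ ?_ ?_
  · exact key
  · -- derivative bound
    have hyX : |y| ≤ X := by
      rcases hy with ⟨h1, h2⟩
      rw [abs_le]; constructor <;> linarith
    have hN : (0:ℝ) ≤ ((2 * s + m : ℕ) : ℝ) := Nat.cast_nonneg _
    have step1 : ‖a s * ((2 * s + m : ℕ) : ℝ) * y ^ (2 * s + m - 1)‖
        ≤ (C * q ^ s / s.factorial) * ((2 * s + m : ℕ) : ℝ) * X ^ (2 * s + m - 1) := by
      rw [norm_mul, norm_mul, norm_pow, Real.norm_eq_abs, Real.norm_eq_abs, Real.norm_eq_abs,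
        abs_of_nonneg hN]
      gcongr
      all_goals first
        | exact ha s
        | exact hyX
        | exact abs_nonneg _
        | positivity
    have step2 : (C * q ^ s / s.factorial) * ((2 * s + m : ℕ) : ℝ) * X ^ (2 * s + m - 1)
        ≤ (C * q ^ s / s.factorial) * ((2 * s + m : ℕ) : ℝ) * X ^ (2 * s + m) := by
      have hfac : (0:ℝ) < s.factorial := by positivity
      gcongr
      all_goals first
        | exact hX1
        | omega
        | positivity
    have step3 : (C * q ^ s / s.factorial) * ((2 * s + m : ℕ) : ℝ) * X ^ (2 * s + m) = u s := by
      simp only [hu, hzdef]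
      rw [pow_add, pow_mul, mul_pow]
      ring
    calc ‖a s * ((2 * s + m : ℕ) : ℝ) * y ^ (2 * s + m - 1)‖
        ≤ (C * q ^ s / s.factorial) * ((2 * s + m : ℕ) : ℝ) * X ^ (2 * s + m - 1) := step1
      _ ≤ (C * q ^ s / s.factorial) * ((2 * s + m : ℕ) : ℝ) * X ^ (2 * s + m) := step2
      _ = u s := step3
  · exact ⟨neg_lt_zero.mpr hX0, hX0⟩
  · -- summable at 0
    refine Summable.of_norm_bounded hCq fun s => ?_
    have h0 : |(0:ℝ) ^ (2 * s + m)| ≤ 1 := by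
      rcases Nat.eq_zero_or_pos (2 * s + m) with h | h
      · simp [h]
      · simp [zero_pow h.ne']
    calc ‖a s * (0:ℝ) ^ (2 * s + m)‖ = |a s| * |(0:ℝ) ^ (2 * s + m)| := abs_mul _ _
      _ ≤ (C * q ^ s / s.factorial) * 1 := by
          apply mul_le_mul (ha s) h0 (abs_nonneg _)
          have : (0:ℝ) < s.factorial := by positivity
          positivity
      _ = C * q ^ s / s.factorial := mul_one _
  · constructor
    · have := neg_abs_le r; simp only [hXdef]; linarith
    · have := le_abs_self r; simp only [hXdef]; linarith


lemma poch_identity (s : ℕ) (a : ℝ) :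
    (ascPochhammer ℝ s).eval a * (a + s) = a * (ascPochhammer ℝ s).eval (a + 1) := by
  have h1 : (ascPochhammer ℝ (s+1)).eval a = (ascPochhammer ℝ s).eval a * (a + s) := by
    rw [ascPochhammer_succ_right]
    simp [Polynomial.eval_mul]
  have h2 : (ascPochhammer ℝ (s+1)).eval a = a * (ascPochhammer ℝ s).eval (a + 1) := by
    rw [ascPochhammer_succ_left]
    simp [Polynomial.eval_mul, Polynomial.eval_comp]
  rw [← h1, h2]

lemma cc_succ (l s : ℕ) :
    cc l s * (2 * (l:ℝ) + 3) = cc (l + 1) s * (2 * (l:ℝ) + 2 * s + 3) := by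
  have hp := poch_identity s ((l:ℝ) + 3/2)
  have hcast : (((l:ℕ) + 1 : ℕ) : ℝ) + 3/2 = ((l:ℝ) + 3/2) + 1 := by push_cast; ring
  have hA := asc_pos l s
  have hB := asc_pos (l+1) s
  rw [hcast] at hB
  have hfac : (0:ℝ) < s.factorial := by positivity
  have key : (ascPochhammer ℝ s).eval ((l:ℝ) + 3/2 + 1) * (2 * (l:ℝ) + 3)
      = (ascPochhammer ℝ s).eval ((l:ℝ) + 3/2) * (2 * (l:ℝ) + 2 * s + 3) := by
    linear_combination -2 * hp
  unfold cc
  rw [hcast, div_mul_eq_mul_div, div_mul_eq_mul_div,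
    div_eq_div_iff (mul_pos hfac hA).ne' (mul_pos hfac hB).ne']
  linear_combination (s.factorial : ℝ) * key

lemma dd_succ (l s : ℕ) :
    dd (l + 1) s * (2 * (s:ℝ) + 2 * l + 3) = dd l s := by
  have hdf : ((2 * (l + 1) + 1)‼ : ℝ) = (2 * (l:ℝ) + 3) * ((2 * l + 1)‼ : ℝ) := by
    have : 2 * (l + 1) + 1 = (2 * l + 1) + 2 := by ring
    rw [this, Nat.doubleFactorial_add_two]
    push_cast
    ring
  have hc := cc_succ l s
  have h1 : (0:ℝ) < ((2 * l + 1)‼ : ℝ) := by exact_mod_cast Nat.doubleFactorial_pos _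
  have h3 : (0:ℝ) < 2 * (l:ℝ) + 3 := by positivity
  unfold dd
  rw [hdf, div_mul_eq_mul_div,
    div_eq_div_iff (mul_pos h3 h1).ne' h1.ne']
  linear_combination -((4:ℝ)⁻¹ ^ s * ((2 * l + 1)‼ : ℝ)) * hc


lemma a_bound (l : ℕ) {κ : ℝ} (hκ : 0 < κ) (s : ℕ) :
    |dd l s * κ ^ (2 * s + l)| ≤ κ ^ l * (κ ^ 2 / 4) ^ s / s.factorial := by
  have hdb := dd_bound l s
  have hfac : (0:ℝ) < s.factorial := by positivity
  rw [abs_mul, abs_pow, abs_of_pos hκ]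
  calc |dd l s| * κ ^ (2 * s + l)
      ≤ (1 * (4:ℝ)⁻¹ ^ s / s.factorial) * κ ^ (2 * s + l) := by
        gcongr
    _ = κ ^ l * (κ ^ 2 / 4) ^ s / s.factorial := by
        rw [pow_add, pow_mul, div_pow]
        field_simp
        ring
        rw [← mul_pow]; norm_num

lemma sphI_scaled (l : ℕ) (κ : ℝ) (r : ℝ) :
    sphI l (κ * r) = ∑' s : ℕ, (dd l s * κ ^ (2 * s + l)) * r ^ (2 * s + l) := by
  rw [sphI_eq]
  exact tsum_congr fun s => by rw [mul_pow]; ring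

lemma sphI_cont (l : ℕ) {κ : ℝ} (hκ : 0 < κ) : Continuous (fun r : ℝ => sphI l (κ * r)) := by
  have hfun : (fun r : ℝ => sphI l (κ * r))
      = fun r : ℝ => ∑' s : ℕ, (dd l s * κ ^ (2 * s + l)) * r ^ (2 * s + l) := by
    funext r; exact sphI_scaled l κ r
  rw [hfun, continuous_iff_continuousAt]
  intro x
  exact (hasDerivAt_tsum_pow _ (κ ^ l) (κ ^ 2 / 4) (by positivity) l (a_bound l hκ) x).continuousAt

lemma keyDeriv (l : ℕ) {κ : ℝ} (hκ : 0 < κ) (r : ℝ) :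
    HasDerivAt (fun x : ℝ => x ^ (l + 2) * sphI (l + 1) (κ * x))
      (κ * r ^ (l + 2) * sphI l (κ * r)) r := by
  have hfun : (fun x : ℝ => x ^ (l + 2) * sphI (l + 1) (κ * x))
      = fun x : ℝ => ∑' s : ℕ, (dd (l + 1) s * κ ^ (2 * s + (l + 1))) * x ^ (2 * s + (2 * l + 3)) := by
    funext x
    rw [sphI_scaled, ← tsum_mul_left]
    refine tsum_congr fun s => ?_
    have hre : x ^ (l + 2) * x ^ (2 * s + (l + 1)) = x ^ (2 * s + (2 * l + 3)) := by
      rw [← pow_add]; congr 1; omega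
    rw [← hre]; ring
  rw [hfun]
  have h := hasDerivAt_tsum_pow (fun s => dd (l + 1) s * κ ^ (2 * s + (l + 1)))
    (κ ^ (l + 1)) (κ ^ 2 / 4) (by positivity) (2 * l + 3) (a_bound (l + 1) hκ) r
  convert h using 1
  rw [sphI_scaled]
  rw [show κ * r ^ (l + 2) * ∑' s : ℕ, (dd l s * κ ^ (2 * s + l)) * r ^ (2 * s + l)
      = ∑' s : ℕ, (κ * r ^ (l + 2)) * ((dd l s * κ ^ (2 * s + l)) * r ^ (2 * s + l)) from by
    rw [tsum_mul_left]]
  refine tsum_congr fun s => ?_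
  have hcast : ((2 * s + (2 * l + 3) : ℕ) : ℝ) = 2 * (s:ℝ) + 2 * l + 3 := by push_cast; ring
  have hexp : 2 * s + (2 * l + 3) - 1 = 2 * s + (2 * l + 2) := by omega
  have hds := dd_succ l s
  rw [hcast, hexp, ← hds]
  have h1 : κ ^ (2 * s + (l + 1)) = κ * κ ^ (2 * s + l) := by
    rw [show 2 * s + (l + 1) = (2 * s + l) + 1 from by omega, pow_succ']
  have h2 : r ^ (l + 2) * r ^ (2 * s + l) = r ^ (2 * s + (2 * l + 2)) := by
    rw [← pow_add]; congr 1; omega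
  rw [h1, ← h2]
  ring


theorem sphI_weighted_integral (R κ : ℝ) (hR : 0 < R) (hκ : 0 < κ) (n l : ℕ) :
    ∫ r in (0:ℝ)..R, (r ^ 2 - R ^ 2) ^ n * r ^ (l + 2) * sphI l (κ * r)
      = (-2 : ℝ) ^ n * n.factorial * R ^ (l + n + 2) * sphI (l + n + 1) (κ * R) / κ ^ (n + 1) := by
  induction n generalizing l with
  | zero =>
    have hderiv : ∀ x ∈ Set.uIcc (0:ℝ) R,
        HasDerivAt (fun x : ℝ => x ^ (l + 2) * sphI (l + 1) (κ * x) / κ)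
          (x ^ (l + 2) * sphI l (κ * x)) x := by
      intro x _
      have h := (keyDeriv l hκ x).div_const κ
      have : κ * x ^ (l + 2) * sphI l (κ * x) / κ = x ^ (l + 2) * sphI l (κ * x) := by
        field_simp
      rwa [this] at h
    have hint : IntervalIntegrable (fun x : ℝ => x ^ (l + 2) * sphI l (κ * x))
        MeasureTheory.volume 0 R :=
      ((continuous_pow (l + 2)).mul (sphI_cont l hκ)).intervalIntegrable 0 R
    have hFTC := intervalIntegral.integral_eq_sub_of_hasDerivAt hderiv hint
    have heq : ∫ r in (0:ℝ)..R, (r ^ 2 - R ^ 2) ^ 0 * r ^ (l + 2) * sphI l (κ * r)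
        = ∫ r in (0:ℝ)..R, r ^ (l + 2) * sphI l (κ * r) := by
      apply intervalIntegral.integral_congr
      intro x _
      simp
    rw [heq, hFTC]
    simp [hκ.ne']
  | succ n ih =>
    have hu : ∀ x ∈ Set.uIcc (0:ℝ) R,
        HasDerivAt (fun x : ℝ => (x ^ 2 - R ^ 2) ^ (n + 1))
          (((n:ℝ) + 1) * (x ^ 2 - R ^ 2) ^ n * (2 * x)) x := by
      intro x _
      have hx : HasDerivAt (fun x : ℝ => x ^ 2 - R ^ 2) (2 * x) x := by
        simpa using (hasDerivAt_pow 2 x).sub_const (R ^ 2)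
      have := hx.fun_pow (n + 1)
      simpa using this
    have hv : ∀ x ∈ Set.uIcc (0:ℝ) R,
        HasDerivAt (fun x : ℝ => x ^ (l + 2) * sphI (l + 1) (κ * x) / κ)
          (x ^ (l + 2) * sphI l (κ * x)) x := by
      intro x _
      have h := (keyDeriv l hκ x).div_const κ
      have : κ * x ^ (l + 2) * sphI l (κ * x) / κ = x ^ (l + 2) * sphI l (κ * x) := by
        field_simp
      rwa [this] at h
    have hu' : IntervalIntegrable (fun x : ℝ => ((n:ℝ) + 1) * (x ^ 2 - R ^ 2) ^ n * (2 * x))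
        MeasureTheory.volume 0 R := by
      apply Continuous.intervalIntegrable
      continuity
    have hv' : IntervalIntegrable (fun x : ℝ => x ^ (l + 2) * sphI l (κ * x))
        MeasureTheory.volume 0 R :=
      ((continuous_pow (l + 2)).mul (sphI_cont l hκ)).intervalIntegrable 0 R
    have hparts := intervalIntegral.integral_mul_deriv_eq_deriv_mul hu hv hu' hv'
    have heq : ∫ r in (0:ℝ)..R, (r ^ 2 - R ^ 2) ^ (n + 1) * r ^ (l + 2) * sphI l (κ * r)
        = ∫ r in (0:ℝ)..R, (r ^ 2 - R ^ 2) ^ (n + 1) * (r ^ (l + 2) * sphI l (κ * r)) := by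
      apply intervalIntegral.integral_congr
      intro x _
      ring
    rw [heq, hparts]
    have heq2 : ∫ r in (0:ℝ)..R,
        ((n:ℝ) + 1) * (r ^ 2 - R ^ 2) ^ n * (2 * r) * (r ^ (l + 2) * sphI (l + 1) (κ * r) / κ)
        = (2 * ((n:ℝ) + 1) / κ) *
            ∫ r in (0:ℝ)..R, (r ^ 2 - R ^ 2) ^ n * r ^ ((l + 1) + 2) * sphI (l + 1) (κ * r) := by
      rw [← intervalIntegral.integral_const_mul]
      apply intervalIntegral.integral_congr
      intro x _
      have hx : x ^ (l + 2) * x = x ^ (l + 1 + 2) := by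
        rw [← pow_succ]
      simp only [Set.uIcc]
      field_simp
      rw [← hx]
      ring
    rw [heq2, ih (l + 1)]
    have hidx1 : l + 1 + n + 2 = l + (n + 1) + 2 := by omega
    have hidx2 : l + 1 + n + 1 = l + (n + 1) + 1 := by omega
    rw [hidx1, hidx2]
    have hR0 : (R:ℝ) ^ 2 - R ^ 2 = 0 := by ring
    rw [hR0]
    have hfac : ((n + 1).factorial : ℝ) = ((n:ℝ) + 1) * n.factorial := by
      rw [Nat.factorial_succ]; push_cast; ring
    rw [hfac]
    have hzero : (0:ℝ) ^ (l + 2) = 0 := by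
      exact zero_pow (by omega)
    rw [hzero]
    have hκn : (κ:ℝ) ^ (n + 1) ≠ 0 := by positivity
    have hκn2 : (κ:ℝ) ^ (n + 1 + 1) ≠ 0 := by positivity
    field_simp
    ring
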